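/- Let m ≥ 1 and let λ1,…,λ_m ≥ 0 and v1,…,v_m ≥ 0 be such that not all products λ_j v_j are zero. Let Z1,…,Z_m be i.i.d. circularly-symmetric standard complex Gaussian random variables, set σ² = Σ_j (1 − 1/(1+λ_j v_j)²) > 0, and define T = (1/σ) Σ_{j=1}^m (1 − |√(λ_j v_j) Z_j − 1|²/(1 + λ_j v_j)). Then T has zero mean, unit variance, and E[|T|⁴] ≤ 9. -/

import Mathlib

open MeasureTheory ProbabilityTheory

noncomputable section

/-- The standard circularly-symmetric complex Gaussian distribution `CN(0,1)`:
the law of `X + iY` where `X, Y` are independent real Gaussians with mean `0`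
and variance `1/2`. -/
def stdComplexGaussian : Measure ℂ :=
  Measure.map (fun p : ℝ × ℝ => (p.1 : ℂ) + (p.2 : ℂ) * Complex.I)
    ((gaussianReal 0 (1/2)).prod (gaussianReal 0 (1/2)))

end

open Real Filter
open scoped ENNReal NNReal

namespace TmomAux

/-- integrability of `x^n * exp (-x^2)` -/
lemma integrable_pow_mul_exp (n : ℕ) :
    Integrable (fun x : ℝ => x ^ n * Real.exp (-x ^ 2)) := by
  have h := integrable_rpow_mul_exp_neg_mul_sq (b := 1) one_pos (s := n)
    (by exact_mod_cast neg_one_lt_zero.trans_le (Nat.cast_nonneg n))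
  simp_rw [Real.rpow_natCast] at h
  simpa using h

noncomputable def I (n : ℕ) : ℝ := ∫ x : ℝ, x ^ n * Real.exp (-x ^ 2)

lemma I_zero : I 0 = Real.sqrt π := by
  simp only [I, pow_zero, one_mul]
  have := integral_gaussian 1
  simpa using this

lemma I_one : I 1 = 0 := by
  have h := integral_neg_eq_self (fun x : ℝ => x ^ 1 * Real.exp (-x ^ 2)) volume
  have h2 : (∫ x : ℝ, (-x) ^ 1 * Real.exp (-(-x) ^ 2)) = - I 1 := by
    rw [show (fun x : ℝ => (-x) ^ 1 * Real.exp (-(-x) ^ 2))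
        = fun x : ℝ => -(x ^ 1 * Real.exp (-x ^ 2)) by funext x; ring_nf,
      integral_neg]
    rfl
  have : - I 1 = I 1 := by rw [← h2]; exact h
  linarith

lemma I_rec (n : ℕ) : I (n + 2) = ((n : ℝ) + 1) / 2 * I n := by
  have hu : ∀ x : ℝ, HasDerivAt (fun x : ℝ => x ^ (n + 1))
      (((n : ℝ) + 1) * x ^ n) x := by
    intro x
    simpa using hasDerivAt_pow (n + 1) x
  have hv : ∀ x : ℝ, HasDerivAt (fun x : ℝ => Real.exp (-x ^ 2))
      (Real.exp (-x ^ 2) * (-(2 * x))) x := by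
    intro x
    have := ((hasDerivAt_pow 2 x).neg).exp
    simpa using this
  have huv' : Integrable (fun x : ℝ => x ^ (n + 1) * (Real.exp (-x ^ 2) * (-(2 * x)))) := by
    refine ((integrable_pow_mul_exp (n + 2)).const_mul (-2)).congr ?_
    filter_upwards with x; ring
  have hu'v : Integrable (fun x : ℝ => ((n : ℝ) + 1) * x ^ n * Real.exp (-x ^ 2)) := by
    refine ((integrable_pow_mul_exp n).const_mul ((n : ℝ) + 1)).congr ?_
    filter_upwards with x; ring
  have huv : Integrable (fun x : ℝ => x ^ (n + 1) * Real.exp (-x ^ 2)) :=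
    integrable_pow_mul_exp (n + 1)
  have key := integral_mul_deriv_eq_deriv_mul_of_integrable (fun x _ => hu x) (fun x _ => hv x) huv' hu'v huv
  -- key : ∫ x, x^(n+1) * (exp(-x^2) * (-(2x))) = - ∫ x, ((n+1) * x^n) * exp(-x^2)
  have h1 : ∫ x : ℝ, x ^ (n + 1) * (Real.exp (-x ^ 2) * (-(2 * x))) = -2 * I (n + 2) := by
    rw [show (fun x : ℝ => x ^ (n + 1) * (Real.exp (-x ^ 2) * (-(2 * x))))
        = fun x : ℝ => (-2) * (x ^ (n + 2) * Real.exp (-x ^ 2)) by funext x; ring,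
      integral_const_mul]
    rfl
  have h2 : ∫ x : ℝ, ((n : ℝ) + 1) * x ^ n * Real.exp (-x ^ 2) = ((n : ℝ) + 1) * I n := by
    rw [show (fun x : ℝ => ((n : ℝ) + 1) * x ^ n * Real.exp (-x ^ 2))
        = fun x : ℝ => ((n : ℝ) + 1) * (x ^ n * Real.exp (-x ^ 2)) by funext x; ring,
      integral_const_mul]
    rfl
  rw [h1, h2] at key
  linarith


/-- The base Gaussian measure `N(0, 1/2)` -/
noncomputable def gm : Measure ℝ := gaussianReal 0 (1/2)

instance : IsProbabilityMeasure gm := by unfold gm; infer_instance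

lemma pdf_eq (x : ℝ) : gaussianPDFReal 0 (1/2) x = (Real.sqrt π)⁻¹ * Real.exp (-x ^ 2) := by
  unfold gaussianPDFReal
  have h2 : Real.sqrt 2 ≠ 0 := by positivity
  have h3 : Real.sqrt π ≠ 0 := by
    have := Real.pi_pos; positivity
  norm_num
  field_simp

lemma gm_eq : gm = volume.withDensity
    (fun x => ENNReal.ofReal ((Real.sqrt π)⁻¹ * Real.exp (-x ^ 2))) := by
  unfold gm
  rw [gaussianReal_of_var_ne_zero 0 (by norm_num)]
  congr 1
  funext x
  rw [gaussianPDF, pdf_eq]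

noncomputable def M (n : ℕ) : ℝ := ∫ x, x ^ n ∂gm

lemma M_eq (n : ℕ) : M n = (Real.sqrt π)⁻¹ * I n := by
  have hmeas : Measurable fun x : ℝ =>
      ((Real.sqrt π)⁻¹ * Real.exp (-x ^ 2)).toNNReal :=
    (measurable_const.mul (measurable_id.pow_const 2).neg.exp).real_toNNReal
  rw [M, gm_eq]
  rw [show (fun x : ℝ => ENNReal.ofReal ((Real.sqrt π)⁻¹ * Real.exp (-x ^ 2)))
      = fun x : ℝ => (((Real.sqrt π)⁻¹ * Real.exp (-x ^ 2)).toNNReal : ℝ≥0∞) from rfl]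
  rw [integral_withDensity_eq_integral_smul hmeas]
  have : ∀ x : ℝ, ((Real.sqrt π)⁻¹ * Real.exp (-x ^ 2)).toNNReal • (x ^ n)
      = (Real.sqrt π)⁻¹ * (x ^ n * Real.exp (-x ^ 2)) := by
    intro x
    rw [NNReal.smul_def, Real.coe_toNNReal _ (by positivity)]
    simp only [smul_eq_mul]; ring
  simp_rw [this]
  rw [integral_const_mul]
  rfl

lemma integrable_pow_gm (n : ℕ) : Integrable (fun x : ℝ => x ^ n) gm := by
  have hmeas : Measurable fun x : ℝ =>
      ((Real.sqrt π)⁻¹ * Real.exp (-x ^ 2)).toNNReal :=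
    (measurable_const.mul (measurable_id.pow_const 2).neg.exp).real_toNNReal
  rw [gm_eq]
  rw [show (fun x : ℝ => ENNReal.ofReal ((Real.sqrt π)⁻¹ * Real.exp (-x ^ 2)))
      = fun x : ℝ => (((Real.sqrt π)⁻¹ * Real.exp (-x ^ 2)).toNNReal : ℝ≥0∞) from rfl]
  rw [integrable_withDensity_iff_integrable_smul hmeas]
  refine ((integrable_pow_mul_exp n).const_mul ((Real.sqrt π)⁻¹)).congr ?_
  filter_upwards with x
  rw [NNReal.smul_def, Real.coe_toNNReal _ (by positivity)]
  simp only [smul_eq_mul]; ring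

lemma sqrtpi_pos : (0:ℝ) < Real.sqrt π := Real.sqrt_pos.mpr Real.pi_pos

lemma M_zero : M 0 = 1 := by
  rw [M_eq, I_zero, inv_mul_cancel₀ (ne_of_gt sqrtpi_pos)]

lemma M_rec (n : ℕ) : M (n + 2) = ((n : ℝ) + 1) / 2 * M n := by
  rw [M_eq, M_eq, I_rec]; ring

lemma M_one : M 1 = 0 := by
  rw [M_eq]; rw [I_one]; ring

lemma M_two : M 2 = 1/2 := by have h := M_rec 0; rw [M_zero] at h; norm_num at h; exact h
lemma M_three : M 3 = 0 := by have h := M_rec 1; rw [M_one] at h; norm_num at h; exact h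
lemma M_four : M 4 = 3/4 := by have h := M_rec 2; rw [M_two] at h; norm_num at h; exact h
lemma M_five : M 5 = 0 := by have h := M_rec 3; rw [M_three] at h; norm_num at h; exact h
lemma M_six : M 6 = 15/8 := by have h := M_rec 4; rw [M_four] at h; norm_num at h; exact h
lemma M_seven : M 7 = 0 := by have h := M_rec 5; rw [M_five] at h; norm_num at h; exact h
lemma M_eight : M 8 = 105/16 := by have h := M_rec 6; rw [M_six] at h; norm_num at h; exact h


/-- product measure -/
noncomputable def gm2 : Measure (ℝ × ℝ) := gm.prod gm

instance : IsProbabilityMeasure gm2 := by unfold gm2; infer_instance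

noncomputable def mono (t : ℝ × ℕ × ℕ) : ℝ × ℝ → ℝ :=
  fun p => t.1 * (p.1 ^ t.2.1 * p.2 ^ t.2.2)

lemma integrable_mono (t : ℝ × ℕ × ℕ) : Integrable (mono t) gm2 := by
  exact ((integrable_pow_gm t.2.1).mul_prod (integrable_pow_gm t.2.2)).const_mul t.1

lemma integral_mono (t : ℝ × ℕ × ℕ) :
    ∫ p, mono t p ∂gm2 = t.1 * (M t.2.1 * M t.2.2) := by
  unfold mono gm2
  rw [integral_const_mul,
    integral_prod_mul (μ := gm) (ν := gm) (fun x : ℝ => x ^ t.2.1) (fun y : ℝ => y ^ t.2.2)]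
  rfl

noncomputable def psum (L : List (ℝ × ℕ × ℕ)) : ℝ × ℝ → ℝ :=
  fun p => (L.map fun t => mono t p).sum

lemma psum_nil : psum [] = fun _ => 0 := rfl

lemma psum_cons (t : ℝ × ℕ × ℕ) (L : List (ℝ × ℕ × ℕ)) :
    psum (t :: L) = fun p => mono t p + psum L p := rfl

lemma integrable_psum (L : List (ℝ × ℕ × ℕ)) : Integrable (psum L) gm2 := by
  induction L with
  | nil => rw [psum_nil]; exact integrable_const 0
  | cons t L ih => rw [psum_cons]; exact (integrable_mono t).add ih

lemma integral_psum (L : List (ℝ × ℕ × ℕ)) :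
    ∫ p, psum L p ∂gm2 = (L.map fun t => t.1 * (M t.2.1 * M t.2.2)).sum := by
  induction L with
  | nil => simp [psum_nil]
  | cons t L ih =>
      rw [psum_cons, List.map_cons, List.sum_cons, ← ih, ← integral_mono t]
      exact integral_add (integrable_mono t) (integrable_psum L)

noncomputable def L1 (b : ℝ) : List (ℝ × ℕ × ℕ) :=
  [((2:ℝ)*b^1, 1, 0),
   ((1:ℝ)*b^2, 0, 0),
   ((-1:ℝ)*b^2, 0, 2),
   ((-1:ℝ)*b^2, 2, 0)]

noncomputable def L2 (b : ℝ) : List (ℝ × ℕ × ℕ) :=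
  [((4:ℝ)*b^2, 2, 0),
   ((4:ℝ)*b^3, 1, 0),
   ((-4:ℝ)*b^3, 1, 2),
   ((-4:ℝ)*b^3, 3, 0),
   ((1:ℝ)*b^4, 0, 0),
   ((-2:ℝ)*b^4, 0, 2),
   ((1:ℝ)*b^4, 0, 4),
   ((-2:ℝ)*b^4, 2, 0),
   ((2:ℝ)*b^4, 2, 2),
   ((1:ℝ)*b^4, 4, 0)]

noncomputable def L4 (b : ℝ) : List (ℝ × ℕ × ℕ) :=
  [((16:ℝ)*b^4, 4, 0),
   ((32:ℝ)*b^5, 3, 0),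
   ((-32:ℝ)*b^5, 3, 2),
   ((-32:ℝ)*b^5, 5, 0),
   ((24:ℝ)*b^6, 2, 0),
   ((-48:ℝ)*b^6, 2, 2),
   ((24:ℝ)*b^6, 2, 4),
   ((-48:ℝ)*b^6, 4, 0),
   ((48:ℝ)*b^6, 4, 2),
   ((24:ℝ)*b^6, 6, 0),
   ((8:ℝ)*b^7, 1, 0),
   ((-24:ℝ)*b^7, 1, 2),
   ((24:ℝ)*b^7, 1, 4),
   ((-8:ℝ)*b^7, 1, 6),
   ((-24:ℝ)*b^7, 3, 0),
   ((48:ℝ)*b^7, 3, 2),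
   ((-24:ℝ)*b^7, 3, 4),
   ((24:ℝ)*b^7, 5, 0),
   ((-24:ℝ)*b^7, 5, 2),
   ((-8:ℝ)*b^7, 7, 0),
   ((1:ℝ)*b^8, 0, 0),
   ((-4:ℝ)*b^8, 0, 2),
   ((6:ℝ)*b^8, 0, 4),
   ((-4:ℝ)*b^8, 0, 6),
   ((1:ℝ)*b^8, 0, 8),
   ((-4:ℝ)*b^8, 2, 0),
   ((12:ℝ)*b^8, 2, 2),
   ((-12:ℝ)*b^8, 2, 4),
   ((4:ℝ)*b^8, 2, 6),
   ((6:ℝ)*b^8, 4, 0),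
   ((-12:ℝ)*b^8, 4, 2),
   ((6:ℝ)*b^8, 4, 4),
   ((-4:ℝ)*b^8, 6, 0),
   ((4:ℝ)*b^8, 6, 2),
   ((1:ℝ)*b^8, 8, 0)]

noncomputable def qf (b : ℝ) : ℝ × ℝ → ℝ :=
  fun p => b ^ 2 * (1 - p.1 ^ 2 - p.2 ^ 2) + 2 * b * p.1

lemma qf_eq_one (b : ℝ) : ∀ p : ℝ × ℝ, qf b p ^ 1 = psum (L1 b) p := by
  rintro ⟨x, y⟩
  simp only [qf, psum, L1, mono, List.map_cons, List.map_nil, List.sum_cons, List.sum_nil]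
  ring

lemma qf_eq_two (b : ℝ) : ∀ p : ℝ × ℝ, qf b p ^ 2 = psum (L2 b) p := by
  rintro ⟨x, y⟩
  simp only [qf, psum, L2, mono, List.map_cons, List.map_nil, List.sum_cons, List.sum_nil]
  ring

lemma qf_eq_four (b : ℝ) : ∀ p : ℝ × ℝ, qf b p ^ 4 = psum (L4 b) p := by
  rintro ⟨x, y⟩
  simp only [qf, psum, L4, mono, List.map_cons, List.map_nil, List.sum_cons, List.sum_nil]
  ring

lemma integrable_qf_one (b : ℝ) : Integrable (fun p => qf b p ^ 1) gm2 :=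
  (integrable_psum (L1 b)).congr (Filter.Eventually.of_forall fun p => (qf_eq_one b p).symm)

lemma integrable_qf_two (b : ℝ) : Integrable (fun p => qf b p ^ 2) gm2 :=
  (integrable_psum (L2 b)).congr (Filter.Eventually.of_forall fun p => (qf_eq_two b p).symm)

lemma integrable_qf_four (b : ℝ) : Integrable (fun p => qf b p ^ 4) gm2 :=
  (integrable_psum (L4 b)).congr (Filter.Eventually.of_forall fun p => (qf_eq_four b p).symm)

lemma integral_qf_one (b : ℝ) : ∫ p, qf b p ^ 1 ∂gm2 = 0 := by
  rw [integral_congr_ae (Filter.Eventually.of_forall (qf_eq_one b)), integral_psum]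
  simp only [L1, List.map_cons, List.map_nil, List.sum_cons, List.sum_nil,
    M_zero, M_one, M_two]
  ring

lemma integral_qf_two (b : ℝ) : ∫ p, qf b p ^ 2 ∂gm2 = b ^ 4 + 2 * b ^ 2 := by
  rw [integral_congr_ae (Filter.Eventually.of_forall (qf_eq_two b)), integral_psum]
  simp only [L2, List.map_cons, List.map_nil, List.sum_cons, List.sum_nil,
    M_zero, M_one, M_two, M_three, M_four]
  ring

lemma integral_qf_four (b : ℝ) :
    ∫ p, qf b p ^ 4 ∂gm2 = 9 * b ^ 8 + 36 * b ^ 6 + 12 * b ^ 4 := by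
  rw [integral_congr_ae (Filter.Eventually.of_forall (qf_eq_four b)), integral_psum]
  simp only [L4, List.map_cons, List.map_nil, List.sum_cons, List.sum_nil,
    M_zero, M_one, M_two, M_three, M_four, M_five, M_six, M_seven, M_eight]
  ring


noncomputable def stdCG : Measure ℂ :=
  Measure.map (fun p : ℝ × ℝ => (p.1 : ℂ) + (p.2 : ℂ) * Complex.I) gm2

noncomputable def phi : ℝ × ℝ → ℂ := fun p => (p.1 : ℂ) + (p.2 : ℂ) * Complex.I

lemma phi_meas : Measurable phi :=
  (Complex.measurable_ofReal.comp measurable_fst).add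
    ((Complex.measurable_ofReal.comp measurable_snd).mul_const Complex.I)

noncomputable def gfun (a : ℝ) : ℂ → ℝ :=
  fun z => 1 - ‖(Real.sqrt a : ℂ) * z - 1‖ ^ 2 / (1 + a)

lemma gfun_cont (a : ℝ) : Continuous (gfun a) := by
  unfold gfun
  exact continuous_const.sub (((continuous_norm.comp
    ((continuous_const.mul continuous_id).sub continuous_const)).pow 2).div_const _)

lemma gfun_apply (a : ℝ) (ha : 0 ≤ a) (p : ℝ × ℝ) :
    gfun a (phi p) = qf (Real.sqrt a) p / (1 + a) := by
  set b := Real.sqrt a with hbdef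
  have hb : b ^ 2 = a := Real.sq_sqrt ha
  have h1 : (1 : ℝ) + a ≠ 0 := by positivity
  obtain ⟨x, y⟩ := p
  simp only [gfun, qf, phi, Complex.sq_norm, Complex.normSq_apply, Complex.sub_re,
    Complex.mul_re, Complex.ofReal_re, Complex.ofReal_im, Complex.add_re, Complex.add_im,
    Complex.mul_im, Complex.I_re, Complex.I_im, Complex.sub_im, Complex.one_re, Complex.one_im]
  rw [← hbdef]
  rw [← hb] at h1 ⊢
  field_simp
  ring

lemma integral_gfun_pow (a : ℝ) (ha : 0 ≤ a) (k : ℕ) :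
    ∫ z, gfun a z ^ k ∂stdCG = (∫ p, qf (Real.sqrt a) p ^ k ∂gm2) / (1 + a) ^ k := by
  rw [stdCG, show (fun p : ℝ × ℝ => (p.1 : ℂ) + (p.2 : ℂ) * Complex.I) = phi from rfl,
    integral_map (f := fun z => gfun a z ^ k) phi_meas.aemeasurable (((gfun_cont a).pow k).aestronglyMeasurable)]
  have : ∀ p : ℝ × ℝ, gfun a (phi p) ^ k = qf (Real.sqrt a) p ^ k / (1 + a) ^ k := by
    intro p; rw [gfun_apply a ha, div_pow]
  simp_rw [this]
  exact integral_div _ _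

lemma integrable_gfun_pow (a : ℝ) (ha : 0 ≤ a) {k : ℕ} (hk : k = 1 ∨ k = 2 ∨ k = 4) :
    Integrable (fun z => gfun a z ^ k) stdCG := by
  rw [stdCG, show (fun p : ℝ × ℝ => (p.1 : ℂ) + (p.2 : ℂ) * Complex.I) = phi from rfl,
    integrable_map_measure (g := fun z => gfun a z ^ k) (((gfun_cont a).pow k).aestronglyMeasurable)
    phi_meas.aemeasurable]
  have : (fun z => gfun a z ^ k) ∘ phi
      = fun p => qf (Real.sqrt a) p ^ k * ((1 + a) ^ k)⁻¹ := by
    funext p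
    simp only [Function.comp_apply]
    rw [gfun_apply a ha, div_pow, div_eq_mul_inv]
  rw [this]
  rcases hk with rfl | rfl | rfl
  · exact (integrable_qf_one _).mul_const _
  · exact (integrable_qf_two _).mul_const _
  · exact (integrable_qf_four _).mul_const _

lemma integral_gfun_one (a : ℝ) (ha : 0 ≤ a) : ∫ z, gfun a z ∂stdCG = 0 := by
  have h := integral_gfun_pow a ha 1
  rw [integral_qf_one] at h
  simpa using h

lemma integral_gfun_two (a : ℝ) (ha : 0 ≤ a) :
    ∫ z, gfun a z ^ 2 ∂stdCG = 1 - 1 / (1 + a) ^ 2 := by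
  rw [integral_gfun_pow a ha 2, integral_qf_two]
  have hb : Real.sqrt a ^ 2 = a := Real.sq_sqrt ha
  have h1 : (1 : ℝ) + a ≠ 0 := by positivity
  field_simp
  nlinarith [hb]

lemma integral_gfun_four (a : ℝ) (ha : 0 ≤ a) :
    ∫ z, gfun a z ^ 4 ∂stdCG ≤ 9 * (1 - 1 / (1 + a) ^ 2) ^ 2 := by
  have hb : Real.sqrt a ^ 2 = a := Real.sq_sqrt ha
  have h1 : (0 : ℝ) < 1 + a := by positivity
  rw [integral_gfun_pow a ha 4, integral_qf_four, div_le_iff₀ (by positivity)]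
  have hb4 : Real.sqrt a ^ 4 = a ^ 2 := by nlinarith [hb]
  have hb6 : Real.sqrt a ^ 6 = a ^ 3 := by nlinarith [hb]
  have hb8 : Real.sqrt a ^ 8 = a ^ 4 := by nlinarith [hb]
  rw [hb4, hb6, hb8]
  have h2 : (1 : ℝ) - 1 / (1 + a) ^ 2 = (a ^ 2 + 2 * a) / (1 + a) ^ 2 := by
    field_simp; ring
  rw [h2]
  have h3 : 9 * ((a ^ 2 + 2 * a) / (1 + a) ^ 2) ^ 2 * (1 + a) ^ 4 = 9 * (a ^ 2 + 2 * a) ^ 2 := by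
    have h4 : ((1 + a) ^ 2) ^ 2 ≠ (0:ℝ) := by positivity
    rw [div_pow, ← mul_div_assoc, div_mul_eq_mul_div, div_eq_iff h4]
    ring
  rw [h3]
  nlinarith [sq_nonneg a]


section SumMoments

variable {Ω : Type*} [MeasureSpace Ω] [IsProbabilityMeasure (ℙ : Measure Ω)]
  {ι : Type*}

lemma sum_moments (Y : ι → Ω → ℝ) (w : ι → ℝ)
    (hind : iIndepFun Y ℙ)
    (hYmeas : ∀ i, Measurable (Y i))
    (hint : ∀ i (k : ℕ), k ≤ 4 → Integrable (fun ω => Y i ω ^ k) ℙ)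
    (h1 : ∀ i, (∫ ω, Y i ω ∂ℙ) = 0)
    (h2 : ∀ i, (∫ ω, Y i ω ^ 2 ∂ℙ) = w i)
    (h4 : ∀ i, (∫ ω, Y i ω ^ 4 ∂ℙ) ≤ 9 * w i ^ 2)
    (s : Finset ι) :
    (∀ k : ℕ, k ≤ 4 → Integrable (fun ω => (∑ j ∈ s, Y j ω) ^ k) ℙ) ∧
    (∫ ω, (∑ j ∈ s, Y j ω) ∂ℙ) = 0 ∧
    (∫ ω, (∑ j ∈ s, Y j ω) ^ 2 ∂ℙ) = (∑ j ∈ s, w j) ∧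
    (∫ ω, (∑ j ∈ s, Y j ω) ^ 4 ∂ℙ) ≤ 9 * (∑ j ∈ s, w j) ^ 2 := by
  classical
  have hw : ∀ i, 0 ≤ w i := by
    intro i
    rw [← h2 i]
    exact integral_nonneg fun ω => sq_nonneg _
  induction s using Finset.induction_on with
  | empty =>
      refine ⟨fun k hk => ?_, by simp, by simp, by simp⟩
      rcases Nat.eq_zero_or_pos k with rfl | hk0
      · simpa using (integrable_const (1:ℝ))
      · simp only [Finset.sum_empty, zero_pow hk0.ne']
        exact integrable_const 0
  | @insert i s hi ih =>
      obtain ⟨intS, ES, ES2, ES4⟩ := ih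
      set S : Ω → ℝ := fun ω => ∑ j ∈ s, Y j ω with hSdef
      have hS : Measurable S := by
        apply Finset.measurable_sum
        exact fun j _ => hYmeas j
      have hIS : IndepFun S (Y i) ℙ := by
        have h := hind.indepFun_finsetSum_of_notMem hYmeas hi
        have hfun : (∑ j ∈ s, Y j) = S := by
          funext ω; rw [hSdef]; exact Finset.sum_apply ω s Y
        rwa [hfun] at h
      have indep : ∀ m n : ℕ, IndepFun (fun ω => S ω ^ m) (fun ω => Y i ω ^ n) ℙ :=
        fun m n => hIS.comp (measurable_id.pow_const m) (measurable_id.pow_const n)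
      have prod_int : ∀ m n : ℕ, m ≤ 4 → n ≤ 4 →
          Integrable (fun ω => S ω ^ m * Y i ω ^ n) ℙ :=
        fun m n hm hn => (indep m n).integrable_mul (intS m hm) (hint i n hn)
      have prod_eq : ∀ m n : ℕ,
          (∫ ω, S ω ^ m * Y i ω ^ n ∂ℙ)
            = (∫ ω, S ω ^ m ∂ℙ) * (∫ ω, Y i ω ^ n ∂ℙ) :=
        fun m n => (indep m n).integral_fun_mul_eq_mul_integral
          ((hS.pow_const m).aestronglyMeasurable)
          (((hYmeas i).pow_const n).aestronglyMeasurable)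
      have hsum : ∀ ω, (∑ j ∈ insert i s, Y j ω) = Y i ω + S ω := by
        intro ω; rw [hSdef]; exact Finset.sum_insert hi
      have ES1 : (∫ ω, S ω ^ 1 ∂ℙ) = 0 := by simpa using ES
      have EY1 : (∫ ω, Y i ω ^ 1 ∂ℙ) = 0 := by simpa using h1 i
      -- integrability of all powers of the new sum
      have intY : ∀ n : ℕ, n ≤ 4 → Integrable (fun ω => Y i ω ^ n) ℙ := hint i
      have key_int : ∀ k : ℕ, k ≤ 4 →
          Integrable (fun ω => (Y i ω + S ω) ^ k) ℙ := by
        intro k hk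
        interval_cases k
        · simpa using (integrable_const (1:ℝ))
        · have : (fun ω => (Y i ω + S ω) ^ 1)
              = fun ω => S ω ^ 0 * Y i ω ^ 1 + S ω ^ 1 * Y i ω ^ 0 := by
            funext ω; ring
          rw [this]
          exact (prod_int 0 1 (by norm_num) (by norm_num)).add
            (prod_int 1 0 (by norm_num) (by norm_num))
        · have : (fun ω => (Y i ω + S ω) ^ 2)
              = fun ω => S ω ^ 2 * Y i ω ^ 0 + (2 * (S ω ^ 1 * Y i ω ^ 1)
                  + S ω ^ 0 * Y i ω ^ 2) := by
            funext ω; ring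
          rw [this]
          exact (prod_int 2 0 (by norm_num) (by norm_num)).add
            (((prod_int 1 1 (by norm_num) (by norm_num)).const_mul 2).add
              (prod_int 0 2 (by norm_num) (by norm_num)))
        · have : (fun ω => (Y i ω + S ω) ^ 3)
              = fun ω => S ω ^ 3 * Y i ω ^ 0 + (3 * (S ω ^ 2 * Y i ω ^ 1)
                  + (3 * (S ω ^ 1 * Y i ω ^ 2) + S ω ^ 0 * Y i ω ^ 3)) := by
            funext ω; ring
          rw [this]
          exact (prod_int 3 0 (by norm_num) (by norm_num)).add
            (((prod_int 2 1 (by norm_num) (by norm_num)).const_mul 3).add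
              (((prod_int 1 2 (by norm_num) (by norm_num)).const_mul 3).add
                (prod_int 0 3 (by norm_num) (by norm_num))))
        · have : (fun ω => (Y i ω + S ω) ^ 4)
              = fun ω => S ω ^ 4 * Y i ω ^ 0 + (4 * (S ω ^ 3 * Y i ω ^ 1)
                  + (6 * (S ω ^ 2 * Y i ω ^ 2) + (4 * (S ω ^ 1 * Y i ω ^ 3)
                  + S ω ^ 0 * Y i ω ^ 4))) := by
            funext ω; ring
          rw [this]
          exact (prod_int 4 0 (by norm_num) (by norm_num)).add
            (((prod_int 3 1 (by norm_num) (by norm_num)).const_mul 4).add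
              (((prod_int 2 2 (by norm_num) (by norm_num)).const_mul 6).add
                (((prod_int 1 3 (by norm_num) (by norm_num)).const_mul 4).add
                  (prod_int 0 4 (by norm_num) (by norm_num)))))
      -- mean
      have mean_eq : (∫ ω, (Y i ω + S ω) ∂ℙ) = 0 := by
        rw [integral_add (by simpa using intY 1 (by norm_num))
          (by simpa using intS 1 (by norm_num))]
        rw [h1 i, ES]
        ring
      -- second moment
      have sq_eq : (∫ ω, (Y i ω + S ω) ^ 2 ∂ℙ) = w i + ∑ j ∈ s, w j := by
        have e2 : ∀ ω : Ω, (Y i ω + S ω) ^ 2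
            = S ω ^ 2 * Y i ω ^ 0 + (2 * (S ω ^ 1 * Y i ω ^ 1) + S ω ^ 0 * Y i ω ^ 2) := by
          intro ω; ring
        rw [integral_congr_ae (Filter.Eventually.of_forall e2)]
        have I20 := prod_int 2 0 (by norm_num) (by norm_num)
        have I11 := prod_int 1 1 (by norm_num) (by norm_num)
        have I02 := prod_int 0 2 (by norm_num) (by norm_num)
        have hg2 : Integrable (fun ω => 2 * (S ω ^ 1 * Y i ω ^ 1) + S ω ^ 0 * Y i ω ^ 2) ℙ :=
          (I11.const_mul 2).add I02
        rw [integral_add I20 hg2, integral_add (I11.const_mul 2) I02]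
        rw [integral_const_mul, prod_eq 2 0, prod_eq 1 1, prod_eq 0 2,
          ES1, EY1]
        simp only [pow_zero, pow_one]
        have hS2 : (∫ ω, S ω ^ 2 ∂ℙ) = ∑ j ∈ s, w j := ES2
        have h20 : (∫ (ω : Ω), (1:ℝ) ∂ℙ) = 1 := by simp
        rw [h20] at *
        rw [hS2]
        have := h2 i
        rw [this]
        ring
      -- fourth moment
      have four_le : (∫ ω, (Y i ω + S ω) ^ 4 ∂ℙ) ≤ 9 * (w i + ∑ j ∈ s, w j) ^ 2 := by
        have e4 : ∀ ω : Ω, (Y i ω + S ω) ^ 4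
            = S ω ^ 4 * Y i ω ^ 0 + (4 * (S ω ^ 3 * Y i ω ^ 1)
              + (6 * (S ω ^ 2 * Y i ω ^ 2) + (4 * (S ω ^ 1 * Y i ω ^ 3)
              + S ω ^ 0 * Y i ω ^ 4))) := by
          intro ω; ring
        rw [integral_congr_ae (Filter.Eventually.of_forall e4)]
        have I40 := prod_int 4 0 (by norm_num) (by norm_num)
        have I31 := prod_int 3 1 (by norm_num) (by norm_num)
        have I22 := prod_int 2 2 (by norm_num) (by norm_num)
        have I13 := prod_int 1 3 (by norm_num) (by norm_num)
        have I04 := prod_int 0 4 (by norm_num) (by norm_num)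
        have hg4c : Integrable (fun ω => 4 * (S ω ^ 1 * Y i ω ^ 3) + S ω ^ 0 * Y i ω ^ 4) ℙ :=
          (I13.const_mul 4).add I04
        have hg4b : Integrable (fun ω => 6 * (S ω ^ 2 * Y i ω ^ 2)
            + (4 * (S ω ^ 1 * Y i ω ^ 3) + S ω ^ 0 * Y i ω ^ 4)) ℙ :=
          (I22.const_mul 6).add hg4c
        have hg4a : Integrable (fun ω => 4 * (S ω ^ 3 * Y i ω ^ 1)
            + (6 * (S ω ^ 2 * Y i ω ^ 2) + (4 * (S ω ^ 1 * Y i ω ^ 3) + S ω ^ 0 * Y i ω ^ 4))) ℙ :=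
          (I31.const_mul 4).add hg4b
        rw [integral_add I40 hg4a, integral_add (I31.const_mul 4) hg4b,
          integral_add (I22.const_mul 6) hg4c, integral_add (I13.const_mul 4) I04]
        rw [integral_const_mul, integral_const_mul, integral_const_mul]
        rw [prod_eq 4 0, prod_eq 3 1, prod_eq 2 2, prod_eq 1 3, prod_eq 0 4,
          ES1, EY1]
        simp only [pow_zero, mul_zero, zero_mul, mul_one, add_zero, zero_add]
        have h20 : (∫ (ω : Ω), (1:ℝ) ∂ℙ) = 1 := by simp
        rw [h20, mul_one, one_mul]
        have hSw : (0:ℝ) ≤ ∑ j ∈ s, w j := Finset.sum_nonneg fun j _ => hw j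
        have hwi := hw i
        have hY4 := h4 i
        have hS2 : (∫ ω, S ω ^ 2 ∂ℙ) = ∑ j ∈ s, w j := ES2
        have hY2 : (∫ ω, Y i ω ^ 2 ∂ℙ) = w i := h2 i
        rw [hS2, hY2]
        nlinarith [ES4]
      refine ⟨fun k hk => ?_, ?_, ?_, ?_⟩
      · have := key_int k hk
        refine this.congr ?_
        filter_upwards with ω
        rw [hsum ω]
      · rw [integral_congr_ae (Filter.Eventually.of_forall fun ω => by rw [hsum ω])]
        exact mean_eq
      · rw [integral_congr_ae (Filter.Eventually.of_forall fun ω => by rw [hsum ω]),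
          Finset.sum_insert hi]
        exact sq_eq
      · rw [integral_congr_ae (Filter.Eventually.of_forall fun ω => by rw [hsum ω]),
          Finset.sum_insert hi]
        exact four_le

end SumMoments


lemma abs_pow_le_one_add_pow_four (t : ℝ) {k : ℕ} (hk : k ≤ 4) :
    |t| ^ k ≤ 1 + t ^ 4 := by
  have h4 : |t| ^ 4 = t ^ 4 := by
    rw [pow_abs]
    exact abs_of_nonneg (by positivity)
  rcases le_or_gt |t| 1 with h | h
  · have : |t| ^ k ≤ 1 := pow_le_one₀ (abs_nonneg t) h
    nlinarith [pow_nonneg (abs_nonneg t) 4, h4]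
  · have h2 : |t| ^ k ≤ |t| ^ 4 := pow_le_pow_right₀ h.le hk
    nlinarith [h4]

lemma int_pow_le {α : Type*} [MeasurableSpace α] (μ : Measure α) [IsProbabilityMeasure μ]
    {f : α → ℝ} (hmeas : AEStronglyMeasurable f μ)
    (h4 : Integrable (fun x => f x ^ 4) μ) {k : ℕ} (hk : k ≤ 4) :
    Integrable (fun x => f x ^ k) μ := by
  refine ((integrable_const (1:ℝ)).add h4).mono'
    ((hmeas.aemeasurable.pow_const k).aestronglyMeasurable) ?_
  filter_upwards with x
  rw [Real.norm_eq_abs, abs_pow]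
  exact abs_pow_le_one_add_pow_four (f x) hk

end TmomAux

lemma stdComplexGaussian_eq : stdComplexGaussian = TmomAux.stdCG := rfl

/-- If `Z₁,…,Z_m` are i.i.d. `CN(0,1)`, the normalized sum
`T = (1/σ) Σ_j (1 − |√(λ_j v_j) Z_j − 1|²/(1+λ_j v_j))`, with
`σ² = Σ_j (1 − (1+λ_j v_j)⁻²)`, has zero mean, unit variance, and fourth moment
at most `9`. -/
theorem complex_gaussian_T_moments {Ω : Type*} [MeasureSpace Ω]
    [IsProbabilityMeasure (ℙ : Measure Ω)]
    {m : ℕ} (hm : 1 ≤ m) (lam v : Fin m → ℝ)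
    (hlam : ∀ j, 0 ≤ lam j) (hv : ∀ j, 0 ≤ v j)
    (hnz : ∃ j, lam j * v j ≠ 0)
    (Z : Fin m → Ω → ℂ) (hmeas : ∀ j, Measurable (Z j))
    (hindep : iIndepFun Z ℙ)
    (hdist : ∀ j, Measure.map (Z j) ℙ = stdComplexGaussian) :
    (let σ : ℝ := Real.sqrt (∑ j, (1 - 1 / (1 + lam j * v j) ^ 2));
     let T : Ω → ℝ := fun ω => (1 / σ) *
        ∑ j, (1 - ‖(Real.sqrt (lam j * v j) : ℂ) * Z j ω - 1‖ ^ 2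
                    / (1 + lam j * v j));
     (∫ ω, T ω ∂ℙ) = 0 ∧ (∫ ω, T ω ^ 2 ∂ℙ) = 1 ∧ (∫ ω, |T ω| ^ 4 ∂ℙ) ≤ 9) := by
  classical
  intro σ T
  set a : Fin m → ℝ := fun j => lam j * v j with ha_def
  have ha : ∀ j, 0 ≤ a j := fun j => mul_nonneg (hlam j) (hv j)
  set w : Fin m → ℝ := fun j => 1 - 1 / (1 + a j) ^ 2 with hw_def
  set Y : Fin m → Ω → ℝ := fun j ω => TmomAux.gfun (a j) (Z j ω) with hY_def
  have hYmeas : ∀ j, Measurable (Y j) :=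
    fun j => ((TmomAux.gfun_cont (a j)).measurable).comp (hmeas j)
  have hmap : ∀ j, Measure.map (Z j) ℙ = TmomAux.stdCG := by
    intro j; rw [hdist j]; rfl
  have hYind : iIndepFun Y ℙ :=
    hindep.comp (fun j => TmomAux.gfun (a j))
      (fun j => (TmomAux.gfun_cont (a j)).measurable)
  have hEk : ∀ (j : Fin m) (k : ℕ),
      (∫ ω, Y j ω ^ k ∂ℙ) = ∫ z, TmomAux.gfun (a j) z ^ k ∂TmomAux.stdCG := by
    intro j k
    rw [← hmap j, integral_map (f := fun z => TmomAux.gfun (a j) z ^ k) (hmeas j).aemeasurable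
      (((TmomAux.gfun_cont (a j)).pow k).aestronglyMeasurable)]
  have hE1 : ∀ j : Fin m,
      (∫ ω, Y j ω ∂ℙ) = ∫ z, TmomAux.gfun (a j) z ∂TmomAux.stdCG := by
    intro j
    rw [← hmap j, integral_map (hmeas j).aemeasurable
      ((TmomAux.gfun_cont (a j)).aestronglyMeasurable)]
  have hI4 : ∀ j : Fin m, Integrable (fun ω => Y j ω ^ 4) ℙ := by
    intro j
    have h := TmomAux.integrable_gfun_pow (a j) (ha j) (Or.inr (Or.inr rfl))
    rw [← hmap j] at h
    exact (integrable_map_measure (g := fun z => TmomAux.gfun (a j) z ^ 4)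
      (((TmomAux.gfun_cont (a j)).pow 4).aestronglyMeasurable)
      (hmeas j).aemeasurable).mp h
  have hint : ∀ (j : Fin m) (k : ℕ), k ≤ 4 → Integrable (fun ω => Y j ω ^ k) ℙ :=
    fun j k hk => TmomAux.int_pow_le ℙ (hYmeas j).aestronglyMeasurable (hI4 j) hk
  have h1 : ∀ j, (∫ ω, Y j ω ∂ℙ) = 0 := by
    intro j
    rw [hE1 j]
    exact TmomAux.integral_gfun_one (a j) (ha j)
  have h2 : ∀ j, (∫ ω, Y j ω ^ 2 ∂ℙ) = w j := by
    intro j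
    rw [hEk j 2]
    exact TmomAux.integral_gfun_two (a j) (ha j)
  have h4 : ∀ j, (∫ ω, Y j ω ^ 4 ∂ℙ) ≤ 9 * w j ^ 2 := by
    intro j
    rw [hEk j 4]
    exact TmomAux.integral_gfun_four (a j) (ha j)
  obtain ⟨intS, ES, ES2, ES4⟩ :=
    TmomAux.sum_moments Y w hYind hYmeas hint h1 h2 h4 Finset.univ
  -- positivity of the total variance
  have hw_nonneg : ∀ j, 0 ≤ w j := by
    intro j
    rw [← h2 j]
    exact integral_nonneg fun ω => sq_nonneg _
  obtain ⟨j0, hj0⟩ := hnz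
  have haj0 : 0 < a j0 := lt_of_le_of_ne (ha j0) (Ne.symm hj0)
  have hwj0 : 0 < w j0 := by
    rw [hw_def]
    have h1a : (1:ℝ) < (1 + a j0) ^ 2 := by nlinarith
    have : 1 / (1 + a j0) ^ 2 < 1 := by
      rw [div_lt_one (by positivity)]
      exact h1a
    simp only
    linarith
  have hpos : 0 < ∑ j, w j :=
    Finset.sum_pos' (fun j _ => hw_nonneg j) ⟨j0, Finset.mem_univ j0, hwj0⟩
  have hσ_def : σ = Real.sqrt (∑ j, w j) := rfl
  have hσpos : 0 < σ := by
    rw [hσ_def]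
    exact Real.sqrt_pos.mpr hpos
  have hσ2 : σ ^ 2 = ∑ j, w j := by
    rw [hσ_def]
    exact Real.sq_sqrt hpos.le
  have hT : T = fun ω => (1 / σ) * ∑ j, Y j ω := rfl
  refine ⟨?_, ?_, ?_⟩
  · rw [hT, integral_const_mul, ES, mul_zero]
  · have : (fun ω => ((1 / σ) * ∑ j, Y j ω) ^ 2)
        = fun ω => (1 / σ) ^ 2 * (∑ j, Y j ω) ^ 2 := by
      funext ω; ring
    rw [hT]
    show (∫ ω, ((1 / σ) * ∑ j, Y j ω) ^ 2 ∂ℙ) = 1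
    rw [this, integral_const_mul, ES2, one_div, inv_pow, ← hσ2,
      inv_mul_cancel₀ (by positivity)]
  · have habs : ∀ ω, |T ω| ^ 4 = (1 / σ) ^ 4 * (∑ j, Y j ω) ^ 4 := by
      intro ω
      rw [← abs_pow, hT]
      rw [abs_of_nonneg (by positivity)]
      ring
    rw [integral_congr_ae (Filter.Eventually.of_forall habs), integral_const_mul]
    have hle : (∫ ω, (∑ j, Y j ω) ^ 4 ∂ℙ) ≤ 9 * (∑ j, w j) ^ 2 := ES4
    have hfac : (0:ℝ) ≤ (1 / σ) ^ 4 := by positivity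
    calc (1 / σ) ^ 4 * (∫ ω, (∑ j, Y j ω) ^ 4 ∂ℙ)
        ≤ (1 / σ) ^ 4 * (9 * (∑ j, w j) ^ 2) := by
          exact mul_le_mul_of_nonneg_left hle hfac
      _ = 9 := by
          rw [← hσ2]
          field_simp
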